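/- For a multi-index α with |α| = N and any M > 0, S_{(α,M)} = L^{NM}_M (I_M ⊗ S_α), where (α,M) denotes α extended by M on the right. -/
import Mathlib


open Matrix Complex

/-- The primitive `n`-th root of unity `ω_n = exp(-2πi/n)`. -/
noncomputable def tw (n : ℕ) : ℂ := Complex.exp (-(2 * Real.pi * Complex.I) / n)

/-- The `n × n` DFT matrix `F_n = [ω_n^{kl}]`. -/
noncomputable def DFT (n : ℕ) : Matrix (Fin n) (Fin n) ℂ :=
  fun r c => tw n ^ (r.val * c.val)

/-- The stride permutation `L^n_k` (with `n = k*m`), sending the basis vector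
`e_{i,k} ⊗ e_{j,m}` (flat index `i*m+j`) to `e_{j,m} ⊗ e_{i,k}` (flat index `j*k+i`). -/
noncomputable def Lmat (n k m : ℕ) : Matrix (Fin n) (Fin n) ℂ :=
  fun r c => if r.val = (c.val % m) * k + c.val / m then 1 else 0

/-- The diagonal twiddle matrix `W^n_m` (with `n = k*m`), acting on
`e_{i,k} ⊗ e_{j,m}` (flat index `c = i*m+j`) by the scalar `ω_n^{ij}`. -/
noncomputable def Wmat (n m : ℕ) : Matrix (Fin n) (Fin n) ℂ :=
  fun r c => if r = c then tw n ^ ((c.val / m) * (c.val % m)) else 0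

/-- Entry of a `k × k` matrix at natural-number indices (0 outside range). -/
noncomputable def ment {k : ℕ} (A : Matrix (Fin k) (Fin k) ℂ) (i j : ℕ) : ℂ :=
  if h : i < k ∧ j < k then A ⟨i, h.1⟩ ⟨j, h.2⟩ else 0

/-- Kronecker product `A ⊗ B` of a `k×k` and an `m×m` matrix, written on flat
indices of size `n = k*m` (row-major: index `i*m+j ↔ e_{i,k} ⊗ e_{j,m}`). -/
noncomputable def kron (n k m : ℕ) (A : Matrix (Fin k) (Fin k) ℂ)
    (B : Matrix (Fin m) (Fin m) ℂ) : Matrix (Fin n) (Fin n) ℂ :=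
  fun r c => ment A (r.val / m) (c.val / m) * ment B (r.val % m) (c.val % m)

/-- Value of a digit list `[d_0, d_1, …]` in the mixed-radix system with radices
`[c_0, c_1, …]` (least-significant first): `d_0 + c_0*(d_1 + c_1*(…))`. -/
def mval : List ℕ → List ℕ → ℕ
  | c :: cs, d :: ds => d + c * mval cs ds
  | _, _ => 0

/-- Digits (least-significant first) of `x` in the mixed-radix system with
radices `[c_0, c_1, …]` (least-significant first). -/
def mdig : List ℕ → ℕ → List ℕ
  | [], _ => []
  | c :: cs, x => x % c :: mdig cs (x / c)

/-- The digit-reversal permutation `P_α` of a multi-index `α = (n_K, …, n_0)`,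
where `a = [n_0, …, n_K]` lists the radices of the system generated by `α`
least-significant first: `x` is decomposed in the system generated by
`α* = (n_0, …, n_K)` and re-read with reversed digits in the system of `α`. -/
def mrev (a : List ℕ) (x : ℕ) : ℕ := mval a ((mdig a.reverse x).reverse)

/-- The digit-reversal permutation matrix `S_α`, `S_α e_x = e_{P_α x}`;
`a = [n_0, …, n_K]` lists `α = (n_K, …, n_0)` least-significant first. -/
noncomputable def Smat (n : ℕ) (a : List ℕ) : Matrix (Fin n) (Fin n) ℂ :=
  fun r c => if r.val = mrev a c.val then 1 else 0

/-- The diagonal matrix `V_{k,m,n}` of size `N = k*m*n`, acting on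
`e_{i,k} ⊗ e_{j,m} ⊗ e_{ℓ,n}` (flat index `i*(m*n) + j*n + ℓ`) by
`ω_{kmn}^{i(ℓ m + j)}`. -/
noncomputable def Vmat (N k m n : ℕ) : Matrix (Fin N) (Fin N) ℂ :=
  fun r c => if r = c then
    tw (k * m * n) ^ ((c.val / (m * n)) * ((c.val % n) * m + (c.val / n) % m)) else 0

lemma mdig_length (l : List ℕ) (x : ℕ) : (mdig l x).length = l.length := by
  induction l generalizing x with
  | nil => rfl
  | cons c cs ih => simp [mdig, ih]

lemma mdig_append (l1 l2 : List ℕ) (x : ℕ) :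
    mdig (l1 ++ l2) x = mdig l1 x ++ mdig l2 (x / l1.prod) := by
  induction l1 generalizing x with
  | nil => simp [mdig]
  | cons c cs ih =>
    simp [mdig, ih, Nat.div_div_eq_div_mul]

lemma mdig_mod (l : List ℕ) (x : ℕ) : mdig l (x % l.prod) = mdig l x := by
  induction l generalizing x with
  | nil => rfl
  | cons c cs ih =>
    simp only [mdig, List.prod_cons]
    rw [Nat.mod_mod_of_dvd _ ⟨cs.prod, rfl⟩, Nat.mod_mul_right_div_self, ih]

lemma mval_append (l1 l2 d1 d2 : List ℕ) (h : d1.length = l1.length) :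
    mval (l1 ++ l2) (d1 ++ d2) = mval l1 d1 + l1.prod * mval l2 d2 := by
  induction l1 generalizing d1 with
  | nil =>
    cases d1 with
    | nil => simp [mval]
    | cons d ds => simp at h
  | cons c cs ih =>
    cases d1 with
    | nil => simp at h
    | cons d ds =>
      have e1 : mval ((c :: cs) ++ l2) ((d :: ds) ++ d2)
          = d + c * mval (cs ++ l2) (ds ++ d2) := rfl
      have e2 : mval (c :: cs) (d :: ds) = d + c * mval cs ds := rfl
      rw [e1, e2, ih ds (by simpa using h), List.prod_cons]
      ring

lemma mrev_aux_lt (l : List ℕ) (hl : ∀ c ∈ l, 0 < c) (x : ℕ) :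
    mval l.reverse ((mdig l x).reverse) < l.prod := by
  induction l generalizing x with
  | nil => simp [mval]
  | cons c cs ih =>
    have hc : 0 < c := hl c (by simp)
    have hcs : ∀ y ∈ cs, 0 < y := fun y hy => hl y (by simp [hy])
    simp only [mdig, List.reverse_cons, List.prod_cons]
    rw [mval_append _ _ _ _ (by simp [mdig_length])]
    have h1 := ih hcs (x / c)
    have h2 : x % c < c := Nat.mod_lt _ hc
    have h3 : mval [c] [x % c] = x % c := by simp [mval]
    rw [h3, List.prod_reverse]
    calc mval cs.reverse (mdig cs (x / c)).reverse + cs.prod * (x % c)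
        ≤ mval cs.reverse (mdig cs (x / c)).reverse + cs.prod * (c - 1) := by
          gcongr
          omega
      _ < cs.prod + cs.prod * (c - 1) := Nat.add_lt_add_right h1 _
      _ = cs.prod * (1 + (c - 1)) := by rw [Nat.mul_add, Nat.mul_one]
      _ = cs.prod * c := by rw [show 1 + (c - 1) = c by omega]
      _ = c * cs.prod := Nat.mul_comm _ _

lemma mrev_lt (a : List ℕ) (ha : ∀ x ∈ a, 0 < x) (x : ℕ) : mrev a x < a.prod := by
  have := mrev_aux_lt a.reverse (fun c hc => ha c (List.mem_reverse.mp hc)) x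
  simpa [mrev, List.prod_reverse] using this

lemma mrev_cons (a : List ℕ) (M x : ℕ) :
    mrev (M :: a) x = x / a.prod % M + M * mrev a (x % a.prod) := by
  unfold mrev
  rw [List.reverse_cons, mdig_append, List.reverse_append, List.prod_reverse]
  have h1 : mdig [M] (x / a.prod) = [x / a.prod % M] := rfl
  rw [h1]
  have h2 : mdig a.reverse x = mdig a.reverse (x % a.prod) := by
    rw [← List.prod_reverse a, mdig_mod]
  rw [h2]
  simp [mval]

lemma ment_one {k i j : ℕ} (hi : i < k) (hj : j < k) :
    ment (1 : Matrix (Fin k) (Fin k) ℂ) i j = if i = j then 1 else 0 := by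
  rw [ment, dif_pos ⟨hi, hj⟩, Matrix.one_apply]
  simp [Fin.ext_iff]

/-- `S_{(α,M)} = L^{NM}_M (I_M ⊗ S_α)`, where `|α| = N`, `M > 0`,
and `(α,M)` extends `α = (n_K,…,n_0)` by `M` on the right (least significant
side), i.e. the least-significant-first radix list becomes `M :: a`. -/
theorem digit_reversal_extend_right (a : List ℕ) (ha : ∀ x ∈ a, 0 < x)
    (M N : ℕ) (hM : 0 < M) (hN : N = a.prod) :
    Smat (N * M) (M :: a) = Lmat (N * M) M N * kron (N * M) M N 1 (Smat N a) := by
  have hN0 : 0 < N := hN ▸ List.prod_pos ha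
  funext r c
  rw [Matrix.mul_apply]
  set q := mrev a (c.val % N) with hq
  have hqlt : q < N := by
    have h := mrev_lt a ha (c.val % N)
    omega
  have hcdiv : c.val / N < M := Nat.div_lt_of_lt_mul c.2
  have ht0lt : c.val / N * N + q < N * M := by
    calc c.val / N * N + q < c.val / N * N + N := by omega
      _ = (c.val / N + 1) * N := by ring
      _ ≤ M * N := Nat.mul_le_mul_right _ (by omega)
      _ = N * M := Nat.mul_comm _ _
  set t0 : Fin (N * M) := ⟨c.val / N * N + q, ht0lt⟩ with ht0
  have ht0mod : (t0 : ℕ) % N = q := by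
    show (c.val / N * N + q) % N = q
    rw [Nat.add_comm, Nat.add_mul_mod_self_right, Nat.mod_eq_of_lt hqlt]
  have ht0div : (t0 : ℕ) / N = c.val / N := by
    show (c.val / N * N + q) / N = c.val / N
    rw [Nat.add_comm, Nat.add_mul_div_right _ _ hN0, Nat.div_eq_of_lt hqlt,
      Nat.zero_add]
  have e1 : Lmat (N * M) M N r t0 = if r.val = q * M + c.val / N then 1 else 0 := by
    show (if r.val = ((t0 : ℕ) % N) * M + (t0 : ℕ) / N then (1 : ℂ) else 0) = _
    rw [ht0mod, ht0div]
  have e2 : kron (N * M) M N 1 (Smat N a) t0 c = 1 := by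
    show ment 1 ((t0 : ℕ) / N) (c.val / N) * ment (Smat N a) ((t0 : ℕ) % N) (c.val % N) = 1
    rw [ht0mod, ht0div, ment_one hcdiv hcdiv, if_pos rfl, one_mul, ment,
      dif_pos ⟨hqlt, Nat.mod_lt _ hN0⟩]
    show (if q = mrev a (c.val % N) then (1 : ℂ) else 0) = 1
    rw [if_pos hq]
  have e3 : mrev (M :: a) c.val = q * M + c.val / N := by
    rw [mrev_cons, ← hN, ← hq, Nat.mod_eq_of_lt hcdiv]
    ring
  have hside : ∀ t : Fin (N * M), t ∈ Finset.univ → t ≠ t0 →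
      Lmat (N * M) M N r t * kron (N * M) M N 1 (Smat N a) t c = 0 := by
    intro t _ htne
    have htM : (t : ℕ) / N < M := Nat.div_lt_of_lt_mul t.2
    show (if r.val = ((t : ℕ) % N) * M + (t : ℕ) / N then (1 : ℂ) else 0) *
        (ment 1 ((t : ℕ) / N) (c.val / N) * ment (Smat N a) ((t : ℕ) % N) (c.val % N)) = 0
    by_cases h1 : (t : ℕ) / N = c.val / N
    · by_cases h2 : (t : ℕ) % N = q
      · exfalso
        apply htne
        apply Fin.ext
        show (t : ℕ) = c.val / N * N + q
        rw [← h1, ← h2]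
        exact (Nat.div_add_mod' _ _).symm
      · have hz : ment (Smat N a) ((t : ℕ) % N) (c.val % N) = 0 := by
          rw [ment, dif_pos ⟨Nat.mod_lt _ hN0, Nat.mod_lt _ hN0⟩]
          show (if (t : ℕ) % N = mrev a (c.val % N) then (1 : ℂ) else 0) = 0
          rw [if_neg (by rw [← hq]; exact h2)]
        rw [hz]
        ring
    · rw [ment_one htM hcdiv, if_neg h1]
      ring
  rw [Finset.sum_eq_single t0 hside (fun h => absurd (Finset.mem_univ t0) h), e1, e2,
    mul_one]
  show (if r.val = mrev (M :: a) c.val then (1 : ℂ) else 0) = _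
  rw [e3]
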